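/- Let 0 < ε < 1, δ = √(2ε), and let P ⊆ ℝ² be a finite nonempty set. For every unit vector u ∈ ℝ², there exists an integer i with 1 ≤ i ≤ ⌈π/δ⌉ such that w(u_i, P) ≥ (1−ε)·w(u, P). -/

import Mathlib

open Real RealInnerProductSpace

/-- The point of the Euclidean plane with coordinates `(a, b)`. -/
noncomputable def pt (a b : ℝ) : EuclideanSpace ℝ (Fin 2) :=
  (WithLp.equiv 2 (Fin 2 → ℝ)).symm ![a, b]

/-- The directional width of a finite nonempty point set `P` in direction `u`:
`max_{p ∈ P} ⟪u, p⟫ - min_{p ∈ P} ⟪u, p⟫`. -/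
noncomputable def dirWidth (P : Finset (EuclideanSpace ℝ (Fin 2))) (hP : P.Nonempty)
    (u : EuclideanSpace ℝ (Fin 2)) : ℝ :=
  P.sup' hP (fun p => ⟪u, p⟫) - P.inf' hP (fun p => ⟪u, p⟫)

private lemma inner_pt (a b : ℝ) (x : EuclideanSpace ℝ (Fin 2)) :
    ⟪pt a b, x⟫ = a * x 0 + b * x 1 := by
  simp [pt, PiLp.inner_apply, Fin.sum_univ_two, RCLike.inner_apply]; ring

private lemma width_ge (P : Finset (EuclideanSpace ℝ (Fin 2))) (hP : P.Nonempty)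
    (v p q : EuclideanSpace ℝ (Fin 2)) (hp : p ∈ P) (hq : q ∈ P) :
    ⟪v, p⟫ - ⟪v, q⟫ ≤ dirWidth P hP v := by
  unfold dirWidth
  gcongr
  · exact Finset.le_sup' _ hp
  · exact Finset.inf'_le _ hq

private lemma abs_inner_le_width (P : Finset (EuclideanSpace ℝ (Fin 2))) (hP : P.Nonempty)
    (v p q : EuclideanSpace ℝ (Fin 2)) (hp : p ∈ P) (hq : q ∈ P) :
    |⟪v, p - q⟫| ≤ dirWidth P hP v := by
  have h1 := width_ge P hP v p q hp hq
  have h2 := width_ge P hP v q p hq hp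
  rw [inner_sub_right]
  exact abs_le.mpr ⟨by linarith, by linarith⟩

set_option maxHeartbeats 2000000 in
theorem rounded_direction_width
    (ε : ℝ) (hε0 : 0 < ε) (hε1 : ε < 1)
    (δ : ℝ) (hδ : δ = Real.sqrt (2 * ε))
    (P : Finset (EuclideanSpace ℝ (Fin 2))) (hP : P.Nonempty)
    (u : EuclideanSpace ℝ (Fin 2)) (hu : ‖u‖ = 1) :
    ∃ i : ℕ, 1 ≤ i ∧ i ≤ ⌈Real.pi / δ⌉₊ ∧
      dirWidth P hP (pt (Real.cos (i * δ)) (Real.sin (i * δ))) ≥ (1 - ε) * dirWidth P hP u := by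
  have hδ0 : 0 < δ := hδ ▸ Real.sqrt_pos.mpr (by linarith)
  have hδsq : δ ^ 2 = 2 * ε := hδ ▸ Real.sq_sqrt (by linarith)
  have hceil1 : 1 ≤ ⌈Real.pi / δ⌉₊ :=
    Nat.one_le_ceil_iff.mpr (div_pos Real.pi_pos hδ0)
  obtain ⟨p, hp, hpe⟩ := Finset.exists_mem_eq_sup' hP (fun p => ⟪u, p⟫)
  obtain ⟨q, hq, hqe⟩ := Finset.exists_mem_eq_inf' hP (fun p => ⟪u, p⟫)
  have hwu : dirWidth P hP u = ⟪u, p - q⟫ := by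
    rw [dirWidth, hpe, hqe, inner_sub_right]
  have hw0 : 0 ≤ dirWidth P hP u := by
    have := abs_inner_le_width P hP u p p hp hp
    simp at this
    linarith [this]
  rcases eq_or_lt_of_le hw0 with hw | hw
  · refine ⟨1, le_refl _, hceil1, ?_⟩
    have := abs_inner_le_width P hP
      (pt (Real.cos ((1 : ℕ) * δ)) (Real.sin ((1 : ℕ) * δ))) p p hp hp
    simp only [sub_self, inner_zero_right, abs_zero] at this
    rw [← hw]
    simpa using this
  · obtain ⟨x, hx⟩ : ∃ x, p - q = x := ⟨_, rfl⟩
    rw [hx] at hwu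
    have hn : dirWidth P hP u ≤ ‖x‖ := by
      rw [hwu]
      calc ⟪u, x⟫ ≤ ‖u‖ * ‖x‖ := real_inner_le_norm u x
        _ = ‖x‖ := by rw [hu, one_mul]
    obtain ⟨n, hnn⟩ : ∃ n : ℝ, ‖x‖ = n := ⟨_, rfl⟩
    rw [hnn] at hn
    have hn0 : 0 < n := lt_of_lt_of_le hw hn
    have hsq : (x 0) ^ 2 + (x 1) ^ 2 = n ^ 2 := by
      rw [← hnn, EuclideanSpace.norm_eq, Real.sq_sqrt (by positivity)]
      simp [Fin.sum_univ_two, sq_abs]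
    obtain ⟨y0, y1, hy1, hy0pos, hysq, habs⟩ :
        ∃ y0 y1 : ℝ, 0 ≤ y1 ∧ (y1 = 0 → 0 < y0) ∧ y0 ^ 2 + y1 ^ 2 = n ^ 2 ∧
          ∀ a b : ℝ, |a * x 0 + b * x 1| = |a * y0 + b * y1| := by
      by_cases h : 0 < x 1 ∨ (x 1 = 0 ∧ 0 < x 0)
      · refine ⟨x 0, x 1, ?_, ?_, hsq, fun a b => rfl⟩
        · rcases h with h | h
          · exact h.le
          · exact h.1.ge
        · intro h1
          rcases h with h | h
          · exact absurd h1 h.ne'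
          · exact h.2
      · push_neg at h
        refine ⟨-(x 0), -(x 1), ?_, ?_, by nlinarith, fun a b => ?_⟩
        · linarith [h.1]
        · intro h1
          have hx1 : x 1 = 0 := by linarith
          have hx0 : x 0 ≤ 0 := h.2 hx1
          have hx0ne : x 0 ≠ 0 := by
            intro h0
            rw [h0, hx1] at hsq
            nlinarith
          have : x 0 < 0 := lt_of_le_of_ne hx0 hx0ne
          linarith
        · rw [show a * -(x 0) + b * -(x 1) = -(a * x 0 + b * x 1) by ring, abs_neg]
    have hy0le : y0 ^ 2 ≤ n ^ 2 := by nlinarith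
    set α := Real.arccos (y0 / n) with hα
    have hcos : Real.cos α = y0 / n := by
      apply Real.cos_arccos
      · rw [neg_le, ← neg_div, div_le_one hn0]; nlinarith
      · rw [div_le_one hn0]; nlinarith
    have hsin : Real.sin α = y1 / n := by
      rw [hα, Real.sin_arccos]
      have h1 : 1 - (y0 / n) ^ 2 = (y1 / n) ^ 2 := by
        field_simp
        nlinarith
      rw [h1, Real.sqrt_sq (by positivity)]
    have hy0eq : y0 = n * Real.cos α := by have := (eq_div_iff hn0.ne').mp hcos; linarith
    have hy1eq : y1 = n * Real.sin α := by have := (eq_div_iff hn0.ne').mp hsin; linarith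
    have hα0 : 0 ≤ α := Real.arccos_nonneg _
    have hαπ : α < Real.pi := by
      refine lt_of_le_of_ne (Real.arccos_le_pi _) fun hEq => ?_
      have hc1 : y0 / n = -1 := by rw [← hcos, hEq, Real.cos_pi]
      have hy0 : y0 = -n := by field_simp at hc1; linarith
      have hy1z : y1 = 0 := by nlinarith
      have := hy0pos hy1z
      nlinarith
    set i := max 1 ⌈α / δ⌉₊ with hi
    have hlohi : α ≤ (i : ℝ) * δ ∧ (i : ℝ) * δ ≤ α + δ := by
      by_cases hc : ⌈α / δ⌉₊ = 0
      · have hα0' : α ≤ 0 := by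
          have := Nat.ceil_eq_zero.mp hc
          by_contra h
          push_neg at h
          have : 0 < α / δ := div_pos h hδ0
          linarith
        have hαz : α = 0 := le_antisymm hα0' hα0
        have : i = 1 := by rw [hi, hc]; rfl
        rw [this, hαz]
        norm_num
        exact hδ0.le
      · have hieq : i = ⌈α / δ⌉₊ := max_eq_right (Nat.one_le_iff_ne_zero.mpr hc)
        constructor
        · have h1 : α / δ ≤ (i : ℝ) := hieq ▸ Nat.le_ceil _
          calc α = (α / δ) * δ := by field_simp
            _ ≤ (i : ℝ) * δ := by nlinarith
        · have h1 : (i : ℝ) < α / δ + 1 := hieq ▸ Nat.ceil_lt_add_one (by positivity)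
          have : (i : ℝ) * δ < (α / δ + 1) * δ := by nlinarith
          have h2 : (α / δ + 1) * δ = α + δ := by field_simp
          linarith
    obtain ⟨hlo, hhi⟩ := hlohi
    refine ⟨i, le_max_left _ _, ?_, ?_⟩
    · exact max_le hceil1 (Nat.ceil_le_ceil (by gcongr))
    · have hcosge : 1 - ε ≤ Real.cos ((i : ℝ) * δ - α) := by
        have h1 : ((i : ℝ) * δ - α) ^ 2 ≤ δ ^ 2 := by nlinarith
        have h2 := Real.one_sub_sq_div_two_le_cos (x := (i : ℝ) * δ - α)
        linarith
      have key : n * Real.cos ((i : ℝ) * δ - α) ≤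
          dirWidth P hP (pt (Real.cos ((i : ℝ) * δ)) (Real.sin ((i : ℝ) * δ))) := by
        have h2 := abs_inner_le_width P hP
          (pt (Real.cos ((i : ℝ) * δ)) (Real.sin ((i : ℝ) * δ))) p q hp hq
        rw [hx, inner_pt, habs] at h2
        have h3 : Real.cos ((i : ℝ) * δ) * y0 + Real.sin ((i : ℝ) * δ) * y1 =
            n * Real.cos ((i : ℝ) * δ - α) := by
          rw [hy0eq, hy1eq, Real.cos_sub]; ring
        calc n * Real.cos ((i : ℝ) * δ - α)
            ≤ |n * Real.cos ((i : ℝ) * δ - α)| := le_abs_self _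
          _ = |Real.cos ((i : ℝ) * δ) * y0 + Real.sin ((i : ℝ) * δ) * y1| := by rw [h3]
          _ ≤ _ := h2
      have hfin : (1 - ε) * dirWidth P hP u ≤ n * Real.cos ((i : ℝ) * δ - α) := by
        nlinarith [hn, hw, hcosge, hn0]
      exact le_trans hfin key
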